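/- arXiv:1707.07468 — 3 statements merged into one kernel-verified Lean document; each statement's English description precedes it below -/
import Mathlib

section
/- Let G be a finite p-group and let IG denote the augmentation ideal of the group algebra F_p[G]. Then IG is nilpotent: there exists N ∈ ℕ such that IG^N = 0. -/
open MonoidAlgebra

/-- The augmentation map of the group algebra `F_p[G]`, sending each group element to `1`. -/
noncomputable def augmentation (p : ℕ) (G : Type*) [Group G] :
    MonoidAlgebra (ZMod p) G →ₐ[ZMod p] ZMod p :=
  MonoidAlgebra.lift (ZMod p) (ZMod p) G 1

/-- The augmentation ideal `IG`, the kernel of the augmentation map. -/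
noncomputable def augmentationIdeal (p : ℕ) (G : Type*) [Group G] :
    Ideal (MonoidAlgebra (ZMod p) G) :=
  RingHom.ker (augmentation p G).toRingHom

section IdealAux

variable {R : Type*} [Ring R]

lemma ideal_mul_assoc (I J K : Ideal R) : (I * J) * K = I * (J * K) := by
  apply le_antisymm
  · rw [Ideal.mul_le]
    intro m hm k hk
    refine Submodule.mul_induction_on hm (fun a ha b hb => ?_) (fun x y hx hy => ?_)
    · rw [mul_assoc]
      exact Ideal.mul_mem_mul ha (Ideal.mul_mem_mul hb hk)
    · rw [add_mul]; exact Ideal.add_mem _ hx hy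
  · rw [Ideal.mul_le]
    intro a ha m hm
    refine Submodule.mul_induction_on hm (fun b hb k hk => ?_) (fun x y hx hy => ?_)
    · rw [← mul_assoc]
      exact Ideal.mul_mem_mul (Ideal.mul_mem_mul ha hb) hk
    · rw [mul_add]; exact Ideal.add_mem _ hx hy

lemma ideal_pow_add (I : Ideal R) (m n : ℕ) (hn : 0 < n) :
    I ^ (m + n) = I ^ m * I ^ n := by
  induction n with
  | zero => omega
  | succ n ih =>
    rcases Nat.eq_zero_or_pos n with h0 | h0
    · subst h0
      rw [Submodule.pow_succ, Submodule.pow_succ, Submodule.pow_zero, Submodule.one_mul]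
    · rw [← Nat.add_assoc, Submodule.pow_succ, Submodule.pow_succ, ih h0, ideal_mul_assoc]

lemma ideal_mul_le_mul {I J I' J' : Ideal R} (h1 : I ≤ I') (h2 : J ≤ J') : I * J ≤ I' * J' :=
  mul_le_mul' h1 h2

lemma ideal_pow_le_pow {I K : Ideal R} (N : ℕ) (h : I ^ N ≤ K) (k : ℕ) :
    I ^ (N * k) ≤ K ^ k := by
  induction k with
  | zero =>
    rw [Nat.mul_zero, Submodule.pow_zero, Submodule.pow_zero]
  | succ k ih =>
    rcases Nat.eq_zero_or_pos N with hN | hN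
    · subst hN
      have hK : K = ⊤ := top_unique (by rw [Submodule.pow_zero, Ideal.one_eq_top] at h; exact h)
      have htop : ∀ m : ℕ, (⊤ : Ideal R) ^ m = ⊤ := by
        intro m
        induction m with
        | zero => rw [Submodule.pow_zero, Ideal.one_eq_top]
        | succ m ihm =>
          rw [Submodule.pow_succ, ihm]
          apply top_unique
          intro x _
          have := Ideal.mul_mem_mul (I := (⊤ : Ideal R)) (J := (⊤ : Ideal R))
            (Submodule.mem_top (x := x)) (Submodule.mem_top (x := (1 : R)))
          rwa [mul_one] at this
      rw [Nat.zero_mul, Submodule.pow_zero, Ideal.one_eq_top, hK, htop]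
    · rw [Nat.mul_succ, ideal_pow_add I _ _ hN, Submodule.pow_succ]
      exact ideal_mul_le_mul ih h

/-- mapping powers of ideals into powers -/
lemma map_mem_pow {S : Type*} [Ring S] (f : R →+* S) (I : Ideal R) (K : Ideal S)
    (h : ∀ x ∈ I, f x ∈ K) : ∀ n : ℕ, ∀ x ∈ I ^ n, f x ∈ K ^ n := by
  intro n
  induction n with
  | zero =>
    intro x _
    rw [Submodule.pow_zero, Ideal.one_eq_top]
    exact Submodule.mem_top
  | succ n ih =>
    intro x hx
    rw [Submodule.pow_succ] at hx ⊢
    refine Submodule.mul_induction_on hx (fun a ha b hb => ?_) (fun a b ha hb => ?_)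
    · rw [map_mul]
      exact Ideal.mul_mem_mul (ih a ha) (h b hb)
    · rw [map_add]
      exact Ideal.add_mem _ ha hb

/-- powers of the left ideal generated by a central nilpotent element vanish -/
lemma span_central_pow_eq_bot (a : R) (hc : ∀ r, a * r = r * a)
    {n : ℕ} (hn : a ^ n = 0) (hn0 : 0 < n) : (Ideal.span {a}) ^ n = ⊥ := by
  have hck : ∀ (k : ℕ) (s : R), a ^ k * s = s * a ^ k := by
    intro k
    induction k with
    | zero => intro s; simp
    | succ k ih =>
      intro s
      rw [pow_succ, mul_assoc, hc, ← mul_assoc, ih, mul_assoc]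
  have key : ∀ k : ℕ, 0 < k → (Ideal.span {a}) ^ k ≤ Ideal.span {a ^ k} := by
    intro k
    induction k with
    | zero => intro h; exact absurd h (by omega)
    | succ k ih =>
      intro _
      rcases Nat.eq_zero_or_pos k with hk | hk
      · subst hk
        rw [zero_add, Submodule.pow_succ, Submodule.pow_zero, Submodule.one_mul, pow_one]
      · rw [Submodule.pow_succ]
        intro x hx
        refine Submodule.mul_induction_on hx (fun m hm b hb => ?_) (fun y z hy hz => ?_)
        · obtain ⟨r, hr⟩ := Submodule.mem_span_singleton.mp (ih hk hm)
          obtain ⟨s, hs⟩ := Submodule.mem_span_singleton.mp hb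
          refine Submodule.mem_span_singleton.mpr ⟨r * s, ?_⟩
          rw [← hr, ← hs]
          simp only [smul_eq_mul, pow_succ, ← mul_assoc]
          rw [mul_assoc r (a ^ k) s, hck k s, ← mul_assoc]
        · exact Submodule.add_mem _ hy hz
  rw [eq_bot_iff]
  refine le_trans (key n hn0) ?_
  rw [hn]
  rw [Ideal.span_le]
  simp

end IdealAux

section Aux

variable (p : ℕ) [Fact p.Prime]

lemma aug_single {G : Type*} [Group G] (g : G) (c : ZMod p) :
    augmentation p G (MonoidAlgebra.single g c) = c := by
  simp [augmentation, MonoidAlgebra.lift_single]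

lemma aug_ideal_bot (G : Type*) [Group G] [Subsingleton G] :
    augmentationIdeal p G = ⊥ := by
  rw [eq_bot_iff]
  intro x hx
  have hx' : augmentation p G x = 0 := hx
  have hxs : x = MonoidAlgebra.single (1 : G) (x.coeff 1) := by
    ext g
    rw [Subsingleton.elim g 1]
    simp
  rw [hxs, aug_single] at hx'
  rw [Submodule.mem_bot, hxs, hx']
  exact MonoidAlgebra.single_zero _

lemma aug_comp {G Q : Type*} [Group G] [Group Q] (f : G →* Q)
    (x : MonoidAlgebra (ZMod p) G) :
    augmentation p Q (MonoidAlgebra.mapDomainRingHom (ZMod p) f x) = augmentation p G x := by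
  have h : (augmentation p Q).toRingHom.comp (MonoidAlgebra.mapDomainRingHom (ZMod p) f)
      = (augmentation p G).toRingHom := by
    apply MonoidAlgebra.ringHom_ext
    · intro b
      show augmentation p Q (MonoidAlgebra.mapDomain f (MonoidAlgebra.single (1 : G) b))
          = augmentation p G (MonoidAlgebra.single (1 : G) b)
      rw [MonoidAlgebra.mapDomain_single, map_one f, aug_single, aug_single]
    · intro a
      show augmentation p Q (MonoidAlgebra.mapDomain f (MonoidAlgebra.single a (1 : ZMod p)))
          = augmentation p G (MonoidAlgebra.single a (1 : ZMod p))
      rw [MonoidAlgebra.mapDomain_single, aug_single, aug_single]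
  exact congrArg (fun F => F x) h

end Aux

section Main

variable (p : ℕ) [Fact p.Prime]

/-- `single (z^n) 1 - 1` lies in the left ideal generated by `single z 1 - 1`. -/
lemma of_pow_sub_one_mem {G : Type*} [Group G] (z : G) (n : ℕ) :
    MonoidAlgebra.single (z ^ n) (1 : ZMod p) - 1 ∈
      Ideal.span {MonoidAlgebra.single z (1 : ZMod p) - 1} := by
  induction n with
  | zero =>
    rw [pow_zero, ← MonoidAlgebra.one_def, sub_self]
    exact Ideal.zero_mem _
  | succ n ih =>
    have h1 : MonoidAlgebra.single (z ^ n) (1 : ZMod p) *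
        (MonoidAlgebra.single z (1 : ZMod p) - 1)
        = MonoidAlgebra.single (z ^ (n + 1)) 1 - MonoidAlgebra.single (z ^ n) 1 := by
      rw [mul_sub, MonoidAlgebra.single_mul_single, mul_one, mul_one, ← pow_succ]
    have h2 : MonoidAlgebra.single (z ^ (n + 1)) (1 : ZMod p) - 1
        = MonoidAlgebra.single (z ^ n) (1 : ZMod p) *
            (MonoidAlgebra.single z (1 : ZMod p) - 1)
          + (MonoidAlgebra.single (z ^ n) (1 : ZMod p) - 1) := by
      rw [h1]; abel
    rw [h2]
    exact Ideal.add_mem _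
      (Ideal.mul_mem_left _ _ (Ideal.subset_span (Set.mem_singleton _))) ih

/-- The kernel of the map to the quotient group algebra lies in the left ideal
generated by `single z 1 - 1`. -/
lemma ker_le_span {G : Type*} [Group G] [Finite G] (z : G)
    (H : Subgroup G) [H.Normal] (hH : H = Subgroup.zpowers z)
    (x : MonoidAlgebra (ZMod p) G)
    (hx : MonoidAlgebra.mapDomainRingHom (ZMod p) (QuotientGroup.mk' H) x = 0) :
    x ∈ Ideal.span {MonoidAlgebra.single z (1 : ZMod p) - 1} := by
  set J := Ideal.span {MonoidAlgebra.single z (1 : ZMod p) - 1} with hJ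
  have hsur : ∀ q : G ⧸ H, ∃ g : G, QuotientGroup.mk g = q :=
    fun q => QuotientGroup.mk_surjective q
  set σ : G ⧸ H → G := fun q => (hsur q).choose with hσdef
  have hσ : ∀ q : G ⧸ H, QuotientGroup.mk (σ q) = q := fun q => (hsur q).choose_spec
  set ρ : G → G := fun g => σ (QuotientGroup.mk g) with hρdef
  have hρ : ∀ g : G, ∃ n : ℕ, g = ρ g * z ^ n := by
    intro g
    have h1 : QuotientGroup.mk (ρ g) = (QuotientGroup.mk g : G ⧸ H) := hσ _
    have h2 : (ρ g)⁻¹ * g ∈ H := (QuotientGroup.eq.mp h1)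
    rw [hH] at h2
    obtain ⟨n, hn⟩ := (isOfFinOrder_of_finite z).mem_powers_iff_mem_zpowers.mpr h2
    refine ⟨n, ?_⟩
    have hn' : z ^ n = (ρ g)⁻¹ * g := hn
    rw [hn', mul_inv_cancel_left]
  -- the "section" operator as an additive monoid hom on the group algebra
  let D : MonoidAlgebra (ZMod p) G →+ MonoidAlgebra (ZMod p) G :=
    AddMonoidHom.mk' (MonoidAlgebra.mapDomain ρ) (MonoidAlgebra.mapDomain_add ρ)
  have hDsingle : ∀ (g : G) (c : ZMod p),
      D (MonoidAlgebra.single g c) = MonoidAlgebra.single (ρ g) c := by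
    intro g c
    show MonoidAlgebra.mapDomain ρ (MonoidAlgebra.single g c) = MonoidAlgebra.single (ρ g) c
    rw [MonoidAlgebra.mapDomain_single]
  have hmap : D x = 0 := by
    show MonoidAlgebra.mapDomain ρ x = (0 : MonoidAlgebra (ZMod p) G)
    have h1 : MonoidAlgebra.mapDomain ρ x
        = MonoidAlgebra.mapDomain σ (MonoidAlgebra.mapDomain (QuotientGroup.mk' H) x) := by
      apply MonoidAlgebra.coeff_injective
      show Finsupp.mapDomain ρ x.coeff
        = Finsupp.mapDomain σ (Finsupp.mapDomain (QuotientGroup.mk' H) x.coeff)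
      rw [← Finsupp.mapDomain_comp]
      rfl
    have hx' : MonoidAlgebra.mapDomain (QuotientGroup.mk' H) x = 0 := hx
    rw [h1, hx', MonoidAlgebra.mapDomain_zero]
  -- key claim
  have step : ∀ (g : G) (c : ZMod p) (f : MonoidAlgebra (ZMod p) G), f - D f ∈ J →
      (MonoidAlgebra.single g c + f) - D (MonoidAlgebra.single g c + f) ∈ J := by
    intro g c f ih
    rw [map_add, hDsingle]
    have : MonoidAlgebra.single g c + f - (MonoidAlgebra.single (ρ g) c + D f)
        = (MonoidAlgebra.single g c - MonoidAlgebra.single (ρ g) c) + (f - D f) := by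
      abel
    rw [this]
    refine Ideal.add_mem _ ?_ ih
    obtain ⟨n, hn⟩ := hρ g
    have heq : MonoidAlgebra.single g c - MonoidAlgebra.single (ρ g) c
        = MonoidAlgebra.single (ρ g) c * (MonoidAlgebra.single (z ^ n) (1 : ZMod p) - 1) := by
      rw [mul_sub, MonoidAlgebra.single_mul_single, mul_one, mul_one, ← hn]
    rw [heq]
    exact Ideal.mul_mem_left _ _ (of_pow_sub_one_mem p z n)
  have key : ∀ y : MonoidAlgebra (ZMod p) G, y - D y ∈ J := by
    intro y
    induction y using MonoidAlgebra.induction with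
    | zero =>
      rw [map_zero, sub_zero]
      exact Ideal.zero_mem _
    | single_add g c f hg hc ih =>
      exact step g c f ih
  have := key x
  rwa [hmap, sub_zero] at this

end Main

section Main2

universe u

variable (p : ℕ) [Fact p.Prime]

lemma single_z_comm {G : Type*} [Group G] (z : G) (hz : z ∈ Subgroup.center G) :
    ∀ r : MonoidAlgebra (ZMod p) G,
      MonoidAlgebra.single z (1 : ZMod p) * r = r * MonoidAlgebra.single z 1 := by
  have step : ∀ (g : G) (c : ZMod p) (f : MonoidAlgebra (ZMod p) G),
      MonoidAlgebra.single z (1 : ZMod p) * f = f * MonoidAlgebra.single z 1 →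
      MonoidAlgebra.single z (1 : ZMod p) * (MonoidAlgebra.single g c + f)
        = (MonoidAlgebra.single g c + f) * MonoidAlgebra.single z 1 := by
    intro g c f ih
    rw [mul_add, add_mul, ih, MonoidAlgebra.single_mul_single,
      MonoidAlgebra.single_mul_single, one_mul, mul_one,
      Subgroup.mem_center_iff.mp hz g]
  intro r
  induction r using MonoidAlgebra.induction with
  | zero =>
    have : MonoidAlgebra.single z (1 : ZMod p) * 0 = 0 * MonoidAlgebra.single z 1 := by
      rw [mul_zero, zero_mul]
    exact this
  | single_add g c f hg hc ih => exact step g c f ih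

lemma charP_ma (G : Type*) [Group G] : CharP (MonoidAlgebra (ZMod p) G) p := by
  have hinj : Function.Injective (MonoidAlgebra.singleOneRingHom :
      ZMod p →+* MonoidAlgebra (ZMod p) G) := by
    intro a b hab
    have : MonoidAlgebra.single (1 : G) a = MonoidAlgebra.single 1 b := hab
    exact MonoidAlgebra.single_right_inj.1 this
  exact charP_of_injective_ringHom hinj p

lemma aux_main : ∀ (n : ℕ), ∀ (G : Type u) [Group G] [Finite G],
    Nat.card G = n → IsPGroup p G →
    ∃ N : ℕ, (augmentationIdeal p G) ^ N = ⊥ := by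
  intro n
  induction n using Nat.strong_induction_on with
  | _ n ih =>
  intro G _ _ hcard hG
  rcases subsingleton_or_nontrivial G with hs | hnt
  · refine ⟨1, ?_⟩
    rw [Submodule.pow_succ, Submodule.pow_zero, Submodule.one_mul]
    exact aug_ideal_bot p G
  · haveI := Fintype.ofFinite G
    haveI : Nontrivial (Subgroup.center G) := hG.center_nontrivial
    have hcG : IsPGroup p (Subgroup.center G) := hG.to_subgroup _
    haveI := Fintype.ofFinite (Subgroup.center G)
    obtain ⟨k, hk⟩ := IsPGroup.iff_card.mp hcG
    have hdvd : p ∣ Fintype.card (Subgroup.center G) := by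
      rw [← Nat.card_eq_fintype_card]
      rcases Nat.eq_zero_or_pos k with h0 | h0
      · subst h0
        rw [pow_zero] at hk
        have : 1 < Nat.card (Subgroup.center G) := Finite.one_lt_card_iff_nontrivial.mpr ‹_›
        omega
      · rw [hk]
        exact dvd_pow_self p (Nat.pos_iff_ne_zero.mp h0)
    obtain ⟨z', hz'⟩ := exists_prime_orderOf_dvd_card p hdvd
    set z : G := (z' : G) with hzdef
    have hzc : z ∈ Subgroup.center G := z'.2
    have hordz : orderOf z = p := by
      rw [Subgroup.orderOf_coe]
      exact hz'
    have hz1 : z ≠ 1 := by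
      intro h
      rw [h, orderOf_one] at hordz
      exact (Fact.out : p.Prime).one_lt.ne' hordz.symm
    set H := Subgroup.zpowers z with hHdef
    haveI : H.Normal := by
      constructor
      intro h hh g
      have hhc : h ∈ Subgroup.center G := Subgroup.zpowers_le.mpr hzc hh
      rw [Subgroup.mem_center_iff.mp hhc g, mul_inv_cancel_right]
      exact hh
    have hQp : IsPGroup p (G ⧸ H) := hG.to_quotient H
    have hcardH : 1 < Nat.card H :=
      (Subgroup.one_lt_card_iff_ne_bot H).mpr (by rw [hHdef, Ne, Subgroup.zpowers_eq_bot]; exact hz1)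
    have hlt : Nat.card (G ⧸ H) < n := by
      have hmul := Subgroup.card_eq_card_quotient_mul_card_subgroup H
      have hQpos : 0 < Nat.card (G ⧸ H) := Nat.card_pos
      rw [hcard] at hmul
      calc Nat.card (G ⧸ H) = Nat.card (G ⧸ H) * 1 := (Nat.mul_one _).symm
        _ < Nat.card (G ⧸ H) * Nat.card H := mul_lt_mul_of_pos_left hcardH hQpos
        _ = n := hmul.symm
    obtain ⟨N, hN⟩ := ih (Nat.card (G ⧸ H)) hlt (G ⧸ H) rfl hQp
    set f := MonoidAlgebra.mapDomainRingHom (ZMod p) (QuotientGroup.mk' H) with hfdef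
    have h1 : ∀ x ∈ augmentationIdeal p G, f x ∈ augmentationIdeal p (G ⧸ H) := by
      intro x hx
      have hx0 : augmentation p G x = 0 := hx
      exact RingHom.mem_ker.mpr (by rw [show (augmentation p (G ⧸ H)).toRingHom (f x)
        = augmentation p (G ⧸ H) (f x) from rfl, aug_comp]; exact hx0)
    have h2 : (augmentationIdeal p G) ^ N
        ≤ Ideal.span {MonoidAlgebra.single z (1 : ZMod p) - 1} := by
      intro x hx
      apply ker_le_span p z H rfl
      have hm := map_mem_pow f _ _ h1 N x hx
      rw [hN] at hm
      exact (Ideal.mem_bot).mp hm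
    haveI : CharP (MonoidAlgebra (ZMod p) G) p := charP_ma p G
    have hcomm := single_z_comm p z hzc
    have hzp : z ^ p = 1 := by
      rw [← hordz]
      exact pow_orderOf_eq_one z
    have hnil : (MonoidAlgebra.single z (1 : ZMod p) - 1) ^ p = 0 := by
      rw [sub_pow_char_of_commute _ (Commute.one_right _), MonoidAlgebra.single_pow,
        one_pow, hzp, one_pow, ← MonoidAlgebra.one_def, sub_self]
    have hcomm' : ∀ r, (MonoidAlgebra.single z (1 : ZMod p) - 1) * r
        = r * (MonoidAlgebra.single z (1 : ZMod p) - 1) := by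
      intro r
      rw [sub_mul, mul_sub, hcomm, one_mul, mul_one]
    have hspan : (Ideal.span {MonoidAlgebra.single z (1 : ZMod p) - 1}) ^ p = ⊥ :=
      span_central_pow_eq_bot _ hcomm' hnil (Fact.out : p.Prime).pos
    refine ⟨N * p, ?_⟩
    rw [eq_bot_iff, ← hspan]
    exact ideal_pow_le_pow N h2 p

end Main2

/-- For a finite `p`-group `G`, the augmentation ideal of `F_p[G]` is nilpotent. -/
theorem augmentationIdeal_nilpotent (p : ℕ) [Fact p.Prime] (G : Type*) [Group G] [Finite G]
    (hG : IsPGroup p G) :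
    ∃ N : ℕ, (augmentationIdeal p G) ^ N = ⊥ :=
  aux_main p (Nat.card G) G rfl hG
end

section
/- Let F be a constant-free group-valued functor on a pointed symmetric monoidal category. Then cr_n F(c₁,…,c_n) is naturally isomorphic to the kernel of the map F(c₁⊙…⊙c_n) → ∏_{i=1}^n F(c₁⊙…⊙ĉ_i⊙…⊙c_n), where ĉ_i indicates omission of the i-th factor. -/
open CategoryTheory MonoidalCategory Limits

variable {C : Type*} [Category C] [MonoidalCategory C] [SymmetricCategory C]

/-- The iterated tensor product of a list of objects. -/
noncomputable def listTensor : List C → C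
  | [] => 𝟙_ C
  | a :: l => a ⊗ listTensor l

/-- The projection `c ⊙ d ⟶ c`, using that the monoidal unit is terminal. -/
noncomputable def proj₁ (hT : IsTerminal (𝟙_ C)) (c d : C) : c ⊗ d ⟶ c :=
  (c ◁ hT.from d) ≫ (ρ_ c).hom

/-- The projection `c ⊙ d ⟶ d`, using that the monoidal unit is terminal. -/
noncomputable def proj₂ (hT : IsTerminal (𝟙_ C)) (c d : C) : c ⊗ d ⟶ d :=
  (hT.from c ▷ d) ≫ (λ_ d).hom

/-- The `n`-th cross-effect of a group-valued functor `F`, following Baues–Pirashvili: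
`cr₁F(c) = ker (F(c) → F(0))`, and recursively
`cr_{n+1}F(c₁,c₂,c₃,…) = cr₂(cr_nF(−,c₃,…))(c₁,c₂)`, realized as a subgroup of
`F(c₁ ⊙ ⋯ ⊙ c_n)`. -/
noncomputable def crG (hT : IsTerminal (𝟙_ C)) (F : C ⥤ GrpCat) :
    (l : List C) → Subgroup (F.obj (listTensor l))
  | [] => ⊤
  | [c] => (F.map (hT.from (listTensor [c]))).hom.ker
  | c₁ :: c₂ :: rest =>
    (crG hT F ((c₁ ⊗ c₂) :: rest)).comap (F.map (α_ c₁ c₂ (listTensor rest)).inv).hom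
    ⊓ (F.map ((α_ c₁ c₂ (listTensor rest)).inv ≫ (proj₁ hT c₁ c₂ ▷ listTensor rest))).hom.ker
    ⊓ (F.map ((α_ c₁ c₂ (listTensor rest)).inv ≫ (proj₂ hT c₁ c₂ ▷ listTensor rest))).hom.ker
    ⊓ (F.map (hT.from (listTensor (c₁ :: c₂ :: rest)))).hom.ker
  termination_by l => l.length


/-- The morphism `c₁ ⊙ ⋯ ⊙ c_n ⟶ c₁ ⊙ ⋯ ⊙ ĉ_i ⊙ ⋯ ⊙ c_n` omitting the `i`-th factor,
induced by the projection `c_i ⟶ 0`. -/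
noncomputable def omitMap (hT : IsTerminal (𝟙_ C)) :
    (l : List C) → (i : Fin l.length) → (listTensor l ⟶ listTensor (l.eraseIdx i))
  | a :: l, ⟨0, _⟩ => (hT.from a ▷ listTensor l) ≫ (λ_ (listTensor l)).hom
  | a :: l, ⟨i + 1, h⟩ => a ◁ omitMap hT l ⟨i, by simpa using h⟩


section Aux
set_option linter.unusedSectionVars false

lemma Fmap_comp_apply (F : C ⥤ GrpCat) {X Y Z : C} (f : X ⟶ Y) (g : Y ⟶ Z) (x : F.obj X) :
    F.map (f ≫ g) x = F.map g (F.map f x) := by simp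

lemma mapInv_eq_one (F : C ⥤ GrpCat) {X Y : C} (e : X ≅ Y) (x : F.obj Y) :
    F.map e.inv x = 1 ↔ x = 1 := by
  constructor
  · intro h
    have h2 : F.map e.hom (F.map e.inv x) = F.map e.hom 1 := by rw [h]
    rw [← Fmap_comp_apply, e.inv_hom_id, F.map_id, map_one] at h2
    simpa using h2
  · rintro rfl; simp

lemma proj2_eq (hT : IsTerminal (𝟙_ C)) (c₁ c₂ T : C) :
    (α_ c₁ c₂ T).inv ≫ (proj₂ hT c₁ c₂ ▷ T) =
      (hT.from c₁ ▷ (c₂ ⊗ T)) ≫ (λ_ (c₂ ⊗ T)).hom := by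
  simp [proj₂, comp_whiskerRight]

lemma proj1_eq (hT : IsTerminal (𝟙_ C)) (c₁ c₂ T : C) :
    (α_ c₁ c₂ T).inv ≫ (proj₁ hT c₁ c₂ ▷ T) =
      c₁ ◁ ((hT.from c₂ ▷ T) ≫ (λ_ T).hom) := by
  simp [proj₁, comp_whiskerRight]

end Aux

/-- For a constant-free group-valued functor `F`, the `n`-th cross-effect
`cr_nF(c₁,…,c_n)` equals the kernel of
`F(c₁ ⊙ ⋯ ⊙ c_n) → ∏ᵢ F(c₁ ⊙ ⋯ ⊙ ĉ_i ⊙ ⋯ ⊙ c_n)`. -/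
theorem crG_eq_ker_omit (hT : IsTerminal (𝟙_ C)) (F : C ⥤ GrpCat)
    (hF : ∀ x : F.obj (𝟙_ C), x = 1)
    (l : List C) (hl : l ≠ []) (x : F.obj (listTensor l)) :
    x ∈ crG hT F l ↔ ∀ i : Fin l.length, F.map (omitMap hT l i) x = 1 := by
  match l with
  | [c] =>
    constructor
    · intro _ i
      fin_cases i
      exact hF _
    · intro _
      simp only [crG, MonoidHom.mem_ker]
      exact hF _
  | c₁ :: c₂ :: rest =>
    have IH := crG_eq_ker_omit hT F hF ((c₁ ⊗ c₂) :: rest) (by simp)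
    rw [crG]
    simp only [Subgroup.mem_inf, Subgroup.mem_comap, MonoidHom.mem_ker]
    have key2 : ∀ j : Fin rest.length,
        (F.map (omitMap hT ((c₁ ⊗ c₂) :: rest) ⟨j + 1, by simpa using j.2⟩)
            (F.map (α_ c₁ c₂ (listTensor rest)).inv x) = 1
          ↔ F.map (omitMap hT (c₁ :: c₂ :: rest) ⟨j + 2, by simpa using j.2⟩) x = 1) := by
      intro j
      erw [← Fmap_comp_apply]
      have heq : (α_ c₁ c₂ (listTensor rest)).inv
            ≫ omitMap hT ((c₁ ⊗ c₂) :: rest) ⟨j + 1, by simpa using j.2⟩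
          = omitMap hT (c₁ :: c₂ :: rest) ⟨j + 2, by simpa using j.2⟩
            ≫ (α_ c₁ c₂ (listTensor (rest.eraseIdx j))).inv := by
        simp [omitMap]
        rfl
      erw [heq, Fmap_comp_apply]
      exact mapInv_eq_one F (α_ _ _ _) _
    constructor
    · rintro ⟨⟨⟨h1, h2⟩, h3⟩, _⟩ i
      obtain ⟨(_ | _ | j), hi⟩ := i
      · rw [proj2_eq] at h3
        simp only [omitMap]
        exact h3
      · rw [proj1_eq] at h2
        simp only [omitMap]
        exact h2
      · exact (key2 ⟨j, by simpa using hi⟩).1 ((IH _).1 h1 _)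
    · intro h
      refine ⟨⟨⟨?_, ?_⟩, ?_⟩, hF _⟩
      · refine (IH _).2 ?_
        intro i
        obtain ⟨(_ | j), hi⟩ := i
        · erw [← Fmap_comp_apply]
          have hu : hT.from (c₁ ⊗ c₂) = proj₂ hT c₁ c₂ ≫ hT.from c₂ := hT.hom_ext _ _
          have hfac : (α_ c₁ c₂ (listTensor rest)).inv
                ≫ omitMap hT ((c₁ ⊗ c₂) :: rest) ⟨0, hi⟩
              = ((α_ c₁ c₂ (listTensor rest)).inv ≫ (proj₂ hT c₁ c₂ ▷ listTensor rest))
                ≫ ((hT.from c₂ ▷ listTensor rest) ≫ (λ_ (listTensor rest)).hom) := by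
            simp only [omitMap]
            rw [Category.assoc, ← comp_whiskerRight_assoc, ← hu]
            rfl
          have h0 : F.map ((α_ c₁ c₂ (listTensor rest)).inv
              ≫ proj₂ hT c₁ c₂ ▷ listTensor rest) x = 1 := by
            rw [proj2_eq]
            exact h ⟨0, by simp⟩
          erw [hfac, Fmap_comp_apply]
          erw [h0, map_one]
        · exact (key2 ⟨j, by simpa using hi⟩).2 (h ⟨j + 2, by simpa using hi⟩)
      · have h1 := h ⟨1, by simp⟩
        rw [proj1_eq]
        simp only [omitMap] at h1
        exact h1
      · have h0 := h ⟨0, by simp⟩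
        rw [proj2_eq]
        simp only [omitMap] at h0
        exact h0
  termination_by l.length
end

section
/- A constant-free group-valued functor F on a pointed symmetric monoidal category is polynomial of degree ≤ n if and only if for all objects c₁,…,c_{n+1}, the natural map F(c₁⊙…⊙c_{n+1}) → ∏_{i=1}^{n+1} F(c₁⊙…⊙ĉ_i⊙…⊙c_{n+1}) is injective. -/
open CategoryTheory MonoidalCategory Limits

variable {C : Type*} [Category C] [MonoidalCategory C] [SymmetricCategory C]

/-- `F` is polynomial of degree at most `n` if its `(n+1)`-st cross-effect is trivial. -/
noncomputable def IsPolynomialOfDegLE (hT : IsTerminal (𝟙_ C)) (F : C ⥤ GrpCat) (n : ℕ) : Prop :=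
  ∀ l : List C, l.length = n + 1 → crG hT F l = ⊥

set_option linter.unusedSectionVars false

variable (F : C ⥤ GrpCat)

lemma comp_app {X Y Z : C} (f : X ⟶ Y) (g : Y ⟶ Z) (x : F.obj X) :
    F.map (f ≫ g) x = F.map g (F.map f x) := by
  rw [F.map_comp]; rfl

lemma comp_iso_eq_one_iff {X Y Z : C} (f : X ⟶ Y) (e : Y ⟶ Z) [IsIso e] (x : F.obj X) :
    F.map (f ≫ e) x = 1 ↔ F.map f x = 1 := by
  rw [comp_app]
  constructor
  · intro h
    have h2 := congrArg (F.map (inv e)) h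
    rw [map_one, ← comp_app, IsIso.hom_inv_id, F.map_id] at h2
    exact h2
  · intro h; rw [h, map_one]

lemma comp_eq_one {X Y Z : C} (f : X ⟶ Y) (g : Y ⟶ Z) (x : F.obj X)
    (h : F.map g (F.map f x) = 1) : F.map (f ≫ g) x = 1 := by
  rw [comp_app]; exact h

lemma eq_one_of_comp {X Y Z : C} (f : X ⟶ Y) (g : Y ⟶ Z) (x : F.obj X)
    (h : F.map (f ≫ g) x = 1) : F.map g (F.map f x) = 1 := by
  rw [← comp_app]; exact h

lemma comp_eq_one_of_left {X Y Z : C} (f : X ⟶ Y) (g : Y ⟶ Z) (x : F.obj X)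
    (h : F.map f x = 1) : F.map (f ≫ g) x = 1 := by
  rw [comp_app, h, map_one]

lemma crG_eq_iInf (hT : IsTerminal (𝟙_ C)) (hF : ∀ x : F.obj (𝟙_ C), x = 1) :
    ∀ l : List C, crG hT F l = ⨅ i : Fin l.length, (F.map (omitMap hT l i)).hom.ker
  | [] => by
    rw [crG, eq_comm, iInf_eq_top]
    exact fun i => absurd i.2 (by simp)
  | [c] => by
    rw [crG]
    have h1 : (F.map (hT.from (listTensor [c]))).hom.ker = ⊤ := by
      ext x; simp [MonoidHom.mem_ker, hF]
    rw [h1, eq_comm, eq_top_iff]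
    refine le_iInf fun i => fun x _ => ?_
    obtain ⟨(_ | i), hi⟩ := i
    · have : ∀ y : F.obj (listTensor (List.eraseIdx [c] 0)), y = 1 := hF
      exact MonoidHom.mem_ker.mpr (this _)
    · simp at hi
  | c₁ :: c₂ :: rest => by
    have IH := crG_eq_iInf hT hF ((c₁ ⊗ c₂) :: rest)
    rw [crG, IH]
    -- morphism identities
    have e0 : ∀ (p : 0 < (c₁ :: c₂ :: rest).length),
        (α_ c₁ c₂ (listTensor rest)).inv ≫ (proj₂ hT c₁ c₂ ▷ listTensor rest)
        = omitMap hT (c₁ :: c₂ :: rest) ⟨0, p⟩ := by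
      intro p
      show _ = (hT.from c₁ ▷ listTensor (c₂ :: rest)) ≫ (λ_ (listTensor (c₂ :: rest))).hom
      show _ = (hT.from c₁ ▷ (c₂ ⊗ listTensor rest)) ≫ (λ_ (c₂ ⊗ listTensor rest)).hom
      simp only [proj₂, comp_whiskerRight]
      rw [← associator_inv_naturality_left_assoc]
      coherence
    have e1 : ∀ (p : 1 < (c₁ :: c₂ :: rest).length),
        (α_ c₁ c₂ (listTensor rest)).inv ≫ (proj₁ hT c₁ c₂ ▷ listTensor rest)
        = omitMap hT (c₁ :: c₂ :: rest) ⟨1, p⟩ := by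
      intro p
      show _ = c₁ ◁ omitMap hT (c₂ :: rest) ⟨0, by simp⟩
      show _ = c₁ ◁ ((hT.from c₂ ▷ listTensor rest) ≫ (λ_ (listTensor rest)).hom)
      simp only [proj₁, comp_whiskerRight, MonoidalCategory.whiskerLeft_comp]
      rw [← associator_inv_naturality_middle_assoc]
      coherence
    have e2 : ∀ (k : ℕ) (h : k < rest.length) (p : k + 1 < ((c₁ ⊗ c₂) :: rest).length)
        (q : k + 2 < (c₁ :: c₂ :: rest).length),
        (α_ c₁ c₂ (listTensor rest)).inv ≫ omitMap hT ((c₁ ⊗ c₂) :: rest) ⟨k + 1, p⟩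
        = omitMap hT (c₁ :: c₂ :: rest) ⟨k + 2, q⟩
          ≫ (α_ c₁ c₂ (listTensor (rest.eraseIdx k))).inv := by
      intro k h p q
      show (α_ c₁ c₂ (listTensor rest)).inv ≫ ((c₁ ⊗ c₂) ◁ omitMap hT rest ⟨k, h⟩)
        = (c₁ ◁ (c₂ ◁ omitMap hT rest ⟨k, h⟩)) ≫ _
      rw [associator_inv_naturality_right]
    have e3 : ∀ (p : 0 < ((c₁ ⊗ c₂) :: rest).length),
        (α_ c₁ c₂ (listTensor rest)).inv ≫ omitMap hT ((c₁ ⊗ c₂) :: rest) ⟨0, p⟩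
        = omitMap hT (c₁ :: c₂ :: rest) ⟨0, by simp⟩
          ≫ ((hT.from c₂ ▷ listTensor rest) ≫ (λ_ (listTensor rest)).hom) := by
      intro p
      show (α_ c₁ c₂ (listTensor rest)).inv
          ≫ (hT.from (c₁ ⊗ c₂) ▷ listTensor rest) ≫ (λ_ (listTensor rest)).hom = _
      have hfrom : hT.from (c₁ ⊗ c₂) = proj₂ hT c₁ c₂ ≫ hT.from c₂ := hT.hom_ext _ _
      rw [hfrom, comp_whiskerRight, ← e0 (by simp)]
      rw [Category.assoc (proj₂ hT c₁ c₂ ▷ listTensor rest)]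
      exact (Category.assoc (α_ c₁ c₂ (listTensor rest)).inv (proj₂ hT c₁ c₂ ▷ listTensor rest) _).symm
    ext x
    rw [Subgroup.mem_iInf]
    simp only [Subgroup.mem_inf, Subgroup.mem_comap, Subgroup.mem_iInf, MonoidHom.mem_ker]
    constructor
    · rintro ⟨⟨⟨hA, hB⟩, hC⟩, hD⟩ i
      obtain ⟨(_ | _ | k), hi⟩ := i
      · have := hC; rw [e0 hi] at this; exact this
      · have := hB; rw [e1 hi] at this; exact this
      · have hk : k < rest.length := by simpa using hi
        have h1 : F.map ((α_ c₁ c₂ (listTensor rest)).inv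
            ≫ omitMap hT ((c₁ ⊗ c₂) :: rest) ⟨k + 1, by simpa using hk⟩) x = 1 :=
          comp_eq_one F _ _ _ (Subgroup.mem_iInf.mp hA ⟨k + 1, by simpa using hk⟩)
        rw [e2 k hk _ (by simpa using hk)] at h1
        exact (comp_iso_eq_one_iff F _ (α_ c₁ c₂ (listTensor (rest.eraseIdx k))).inv x).mp h1
    · intro h
      refine ⟨⟨⟨Subgroup.mem_comap.mpr (Subgroup.mem_iInf.mpr fun j => ?_), ?_⟩, ?_⟩, hF _⟩
      · obtain ⟨(_ | k), hj⟩ := j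
        · refine eq_one_of_comp F (α_ c₁ c₂ (listTensor rest)).inv (omitMap hT ((c₁ ⊗ c₂) :: rest) ⟨0, hj⟩) x ?_
          rw [e3 hj]
          exact comp_eq_one_of_left F _ _ _ (h ⟨0, by simp⟩)
        · have hk : k < rest.length := by simpa using hj
          refine eq_one_of_comp F (α_ c₁ c₂ (listTensor rest)).inv (omitMap hT ((c₁ ⊗ c₂) :: rest) ⟨k + 1, hj⟩) x ?_
          rw [e2 k hk hj (by simpa using hk)]
          exact (comp_iso_eq_one_iff F _ (α_ c₁ c₂ (listTensor (rest.eraseIdx k))).inv x).mpr (h ⟨k + 2, by simpa using hk⟩)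
      · have := h ⟨1, by simp⟩; rw [← e1 (by simp)] at this; exact this
      · have := h ⟨0, by simp⟩; rw [← e0 (by simp)] at this; exact this

/-- A constant-free group-valued functor `F` is polynomial of degree ≤ n if and only if,
for all objects `c₁,…,c_{n+1}`, the natural map
`F(c₁ ⊙ ⋯ ⊙ c_{n+1}) → ∏ᵢ F(c₁ ⊙ ⋯ ⊙ ĉ_i ⊙ ⋯ ⊙ c_{n+1})` is injective. -/
theorem isPolynomialOfDegLE_iff_injective (hT : IsTerminal (𝟙_ C)) (F : C ⥤ GrpCat)
    (hF : ∀ x : F.obj (𝟙_ C), x = 1) (n : ℕ) :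
    IsPolynomialOfDegLE hT F n ↔
      ∀ l : List C, l.length = n + 1 →
        Function.Injective
          (fun (x : F.obj (listTensor l)) (i : Fin l.length) => F.map (omitMap hT l i) x) := by
  constructor
  · intro h l hl
    have hc := h l hl
    rw [crG_eq_iInf F hT hF] at hc
    intro x y hxy
    have hmem : x * y⁻¹ ∈ ⨅ i : Fin l.length, (F.map (omitMap hT l i)).hom.ker := by
      rw [Subgroup.mem_iInf]
      intro i
      have hi := congrFun hxy i
      simp only at hi
      simp [MonoidHom.mem_ker, map_mul, map_inv, hi]
    rw [hc, Subgroup.mem_bot] at hmem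
    exact mul_inv_eq_one.mp hmem
  · intro h l hl
    have hinj := h l hl
    rw [crG_eq_iInf F hT hF, eq_bot_iff]
    intro x hx
    rw [Subgroup.mem_iInf] at hx
    have hx1 : (fun i => F.map (omitMap hT l i) x) = (fun i => F.map (omitMap hT l i) (1 : F.obj (listTensor l))) := by
      funext i
      rw [MonoidHom.mem_ker.mp (hx i), map_one]
    simpa [Subgroup.mem_bot] using hinj hx1
end
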